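/- Let L be a complex Banach Lie algebra and let a ∈ L. Then: (1) a belongs to every maximal proper closed Lie subalgebra of finite codimension in L if and only if, for every proper closed Lie subalgebra M of finite codimension in L, the smallest closed Lie subalgebra of L containing M and a is a proper subalgebra of L; (2) a belongs to every maximal proper closed Lie ideal of finite codimension in L if and only if, for every proper closed Lie ideal J of finite codimension in L, the smallest closed Lie ideal of L containing J and a is a proper ideal of L. -/

import Mathlib

open Module

section Aux

/-- A submodule containing a closed finite-codimensional submodule is closed. -/
theorem aux_closed {L : Type*} [AddCommGroup L] [Module ℂ L] [TopologicalSpace L]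
    [T2Space L] [IsTopologicalAddGroup L] [ContinuousSMul ℂ L]
    {p q : Submodule ℂ L} (hp : IsClosed (p : Set L)) (hfd : FiniteDimensional ℂ (L ⧸ p))
    (hpq : p ≤ q) : IsClosed (q : Set L) := by
  haveI := hfd
  haveI : IsClosed ((p : Set L)) := hp
  have hcont : Continuous p.mkQ := continuous_quot_mk
  have hclosed : IsClosed ((q.map p.mkQ : Submodule ℂ (L ⧸ p)) : Set (L ⧸ p)) :=
    Submodule.closed_of_finiteDimensional _
  have hq : q = (q.map p.mkQ).comap p.mkQ := by
    rw [Submodule.comap_map_eq, Submodule.ker_mkQ, sup_of_le_left hpq]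
  rw [hq]
  exact hclosed.preimage hcont

theorem aux_fd {L : Type*} [AddCommGroup L] [Module ℂ L]
    {p q : Submodule ℂ L} (hfd : FiniteDimensional ℂ (L ⧸ p)) (hpq : p ≤ q) :
    FiniteDimensional ℂ (L ⧸ q) := by
  haveI := hfd
  have hsurj : Function.Surjective (p.mapQ q LinearMap.id hpq) := by
    intro x
    obtain ⟨y, rfl⟩ := q.mkQ_surjective x
    exact ⟨p.mkQ y, rfl⟩
  exact Module.Finite.of_surjective _ hsurj

theorem aux_map_lt {L : Type*} [AddCommGroup L] [Module ℂ L] {p q q' : Submodule ℂ L}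
    (hpq : p ≤ q) (hpq' : p ≤ q') (h : q < q') : q.map p.mkQ < q'.map p.mkQ := by
  refine lt_of_le_of_ne (Submodule.map_mono h.le) ?_
  intro heq
  have h2 := congrArg (Submodule.comap p.mkQ) heq
  rw [Submodule.comap_map_eq, Submodule.comap_map_eq, Submodule.ker_mkQ,
    sup_of_le_left hpq, sup_of_le_left hpq'] at h2
  exact h.ne h2

/-- Existence of a maximal proper Lie subalgebra above a proper finite-codimensional one. -/
theorem aux_max_subalg {L : Type*} [LieRing L] [LieAlgebra ℂ L]
    {M : LieSubalgebra ℂ L} (hM : M ≠ ⊤) (hfd : FiniteDimensional ℂ (L ⧸ M.toSubmodule)) :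
    ∃ N : LieSubalgebra ℂ L, M ≤ N ∧ N ≠ ⊤ ∧
      ∀ N' : LieSubalgebra ℂ L, N < N' → N' = ⊤ := by
  haveI := hfd
  set π := M.toSubmodule.mkQ with hπ
  set d : LieSubalgebra ℂ L → ℕ := fun N => finrank ℂ ((N : Submodule ℂ L).map π) with hd
  set S : Set ℕ := {n | ∃ N : LieSubalgebra ℂ L, M ≤ N ∧ N ≠ ⊤ ∧ d N = n} with hS
  have hne : S.Nonempty := ⟨d M, M, le_refl M, hM, rfl⟩
  have hbdd : BddAbove S := by
    refine ⟨finrank ℂ (L ⧸ M.toSubmodule), ?_⟩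
    rintro n ⟨N, _, _, rfl⟩
    exact Submodule.finrank_le _
  obtain ⟨N, hMN, hNtop, hdN⟩ := Nat.sSup_mem hne hbdd
  refine ⟨N, hMN, hNtop, ?_⟩
  intro N' hlt
  by_contra hN'
  have hsub : (N : Submodule ℂ L) < (N' : Submodule ℂ L) := by
    refine lt_of_le_of_ne ((LieSubalgebra.toSubmodule_le_toSubmodule _ _).2 hlt.le) ?_
    intro heq
    exact hlt.ne (LieSubalgebra.toSubmodule_injective heq)
  have hmaplt : (N : Submodule ℂ L).map π < (N' : Submodule ℂ L).map π :=
    aux_map_lt ((LieSubalgebra.toSubmodule_le_toSubmodule _ _).2 hMN)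
      ((LieSubalgebra.toSubmodule_le_toSubmodule _ _).2 (hMN.trans hlt.le)) hsub
  have hltd : d N < d N' := Submodule.finrank_lt_finrank_of_lt hmaplt
  have hmem : d N' ∈ S := ⟨N', hMN.trans hlt.le, hN', rfl⟩
  have := le_csSup hbdd hmem
  omega

/-- Existence of a maximal proper Lie ideal above a proper finite-codimensional one. -/
theorem aux_max_ideal {L : Type*} [LieRing L] [LieAlgebra ℂ L]
    {M : LieIdeal ℂ L} (hM : M ≠ ⊤) (hfd : FiniteDimensional ℂ (L ⧸ (M : Submodule ℂ L))) :
    ∃ N : LieIdeal ℂ L, M ≤ N ∧ N ≠ ⊤ ∧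
      ∀ N' : LieIdeal ℂ L, N < N' → N' = ⊤ := by
  haveI := hfd
  set π := (M : Submodule ℂ L).mkQ with hπ
  set d : LieIdeal ℂ L → ℕ := fun N => finrank ℂ ((N : Submodule ℂ L).map π) with hd
  set S : Set ℕ := {n | ∃ N : LieIdeal ℂ L, M ≤ N ∧ N ≠ ⊤ ∧ d N = n} with hS
  have hne : S.Nonempty := ⟨d M, M, le_refl M, hM, rfl⟩
  have hbdd : BddAbove S := by
    refine ⟨finrank ℂ (L ⧸ (M : Submodule ℂ L)), ?_⟩
    rintro n ⟨N, _, _, rfl⟩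
    exact Submodule.finrank_le _
  obtain ⟨N, hMN, hNtop, hdN⟩ := Nat.sSup_mem hne hbdd
  refine ⟨N, hMN, hNtop, ?_⟩
  intro N' hlt
  by_contra hN'
  have hsub : (N : Submodule ℂ L) < (N' : Submodule ℂ L) := by
    refine lt_of_le_of_ne ((LieSubmodule.toSubmodule_le_toSubmodule _ _).2 hlt.le) ?_
    intro heq
    exact hlt.ne (LieSubmodule.toSubmodule_inj _ _ |>.1 heq)
  have hmaplt : (N : Submodule ℂ L).map π < (N' : Submodule ℂ L).map π :=
    aux_map_lt ((LieSubmodule.toSubmodule_le_toSubmodule _ _).2 hMN)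
      ((LieSubmodule.toSubmodule_le_toSubmodule _ _).2 (hMN.trans hlt.le)) hsub
  have hltd : d N < d N' := Submodule.finrank_lt_finrank_of_lt hmaplt
  have hmem : d N' ∈ S := ⟨N', hMN.trans hlt.le, hN', rfl⟩
  have := le_csSup hbdd hmem
  omega

end Aux

/-- Nongenerator characterizations: an element lies in every maximal proper closed Lie
subalgebra (resp. ideal) of finite codimension iff it is a nongenerator with respect to all
proper closed Lie subalgebras (resp. ideals) of finite codimension. -/
theorem stmt_7 {L : Type*} [LieRing L] [LieAlgebra ℂ L] [MetricSpace L] [CompleteSpace L]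
    (hdist : ∀ x y z : L, dist (x + z) (y + z) = dist x y)
    (hnorm : ∀ (c : ℂ) (x : L), dist (c • x) 0 = ‖c‖ * dist x 0)
    (hbracket : Continuous fun p : L × L => ⁅p.1, p.2⁆) (a : L) :
    ((∀ M : LieSubalgebra ℂ L, M ≠ ⊤ → IsClosed (M : Set L) →
        FiniteDimensional ℂ (L ⧸ M.toSubmodule) →
        (∀ N : LieSubalgebra ℂ L, M < N → N = ⊤) → a ∈ M) ↔
      (∀ M : LieSubalgebra ℂ L, M ≠ ⊤ → IsClosed (M : Set L) →
        FiniteDimensional ℂ (L ⧸ M.toSubmodule) →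
        sInf {N : LieSubalgebra ℂ L | IsClosed (N : Set L) ∧ M ≤ N ∧ a ∈ N} ≠ ⊤)) ∧
    ((∀ J : LieIdeal ℂ L, J ≠ ⊤ → IsClosed (J : Set L) →
        FiniteDimensional ℂ (L ⧸ (J : Submodule ℂ L)) →
        (∀ I : LieIdeal ℂ L, J < I → I = ⊤) → a ∈ J) ↔
      (∀ J : LieIdeal ℂ L, J ≠ ⊤ → IsClosed (J : Set L) →
        FiniteDimensional ℂ (L ⧸ (J : Submodule ℂ L)) →
        sInf {I : LieIdeal ℂ L | IsClosed (I : Set L) ∧ J ≤ I ∧ a ∈ I} ≠ ⊤)) := by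
  -- dist in terms of subtraction
  have key : ∀ x y : L, dist x y = dist (x - y) 0 := by
    intro x y
    have := hdist (x - y) 0 y
    simpa using this
  -- topological group structure
  have hadd : Continuous fun p : L × L => p.1 + p.2 := by
    refine (LipschitzWith.of_dist_le_mul (K := 2) ?_).continuous
    rintro ⟨x, y⟩ ⟨x', y'⟩
    have h1 : dist (x + y) (x' + y') ≤ dist x x' + dist y y' := by
      calc dist (x + y) (x' + y') ≤ dist (x + y) (x' + y) + dist (x' + y) (x' + y') :=
            dist_triangle _ _ _
        _ = dist x x' + dist y y' := by
            rw [hdist]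
            congr 1
            rw [add_comm x' y, add_comm x' y', hdist]
    have h2 : dist x x' ≤ dist (x, y) (x', y') := le_max_left _ _
    have h3 : dist y y' ≤ dist (x, y) (x', y') := le_max_right _ _
    push_cast
    linarith
  have hneg : Continuous fun x : L => -x := by
    refine (LipschitzWith.of_dist_le_mul (K := 1) ?_).continuous
    intro x y
    have := hdist (-x) (-y) (x + y)
    have hx : -x + (x + y) = y := by abel
    have hy : -y + (x + y) = x := by abel
    rw [hx, hy] at this
    rw [← this, dist_comm]
    simp
  haveI : IsTopologicalAddGroup L :=
    { continuous_add := hadd, continuous_neg := hneg }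
  haveI : ContinuousSMul ℂ L := by
    constructor
    rw [continuous_iff_continuousAt]
    rintro ⟨c₀, x₀⟩
    have hbound : ∀ p : ℂ × L, dist (p.1 • p.2) (c₀ • x₀) ≤
        ‖p.1‖ * dist p.2 x₀ + ‖p.1 - c₀‖ * dist x₀ 0 := by
      rintro ⟨c, x⟩
      calc dist (c • x) (c₀ • x₀) ≤ dist (c • x) (c • x₀) + dist (c • x₀) (c₀ • x₀) :=
            dist_triangle _ _ _
        _ = ‖c‖ * dist x x₀ + ‖c - c₀‖ * dist x₀ 0 := by
            rw [key (c • x) (c • x₀), key (c • x₀) (c₀ • x₀), ← smul_sub, ← sub_smul,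
              hnorm, hnorm, ← key]
    have hg : Continuous fun p : ℂ × L => ‖p.1‖ * dist p.2 x₀ + ‖p.1 - c₀‖ * dist x₀ 0 := by
      fun_prop
    have hg0 : ‖c₀‖ * dist x₀ x₀ + ‖c₀ - c₀‖ * dist x₀ 0 = 0 := by simp
    unfold ContinuousAt
    rw [tendsto_iff_dist_tendsto_zero]
    refine squeeze_zero (fun p => dist_nonneg) hbound ?_
    have := hg.tendsto (c₀, x₀)
    rwa [hg0] at this
  constructor
  · -- Lie subalgebra case
    constructor
    · intro h M hMtop hMcl hMfd
      obtain ⟨N, hMN, hNtop, hmax⟩ := aux_max_subalg hMtop hMfd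
      have hMN' : M.toSubmodule ≤ N.toSubmodule :=
        (LieSubalgebra.toSubmodule_le_toSubmodule _ _).2 hMN
      have hNcl : IsClosed (N : Set L) := aux_closed hMcl hMfd hMN'
      haveI hNfd : FiniteDimensional ℂ (L ⧸ N.toSubmodule) := aux_fd hMfd hMN'
      have haN : a ∈ N := h N hNtop hNcl hNfd hmax
      intro htop
      have hle : sInf {N' : LieSubalgebra ℂ L | IsClosed (N' : Set L) ∧ M ≤ N' ∧ a ∈ N'} ≤ N :=
        sInf_le ⟨hNcl, hMN, haN⟩
      rw [htop] at hle
      exact hNtop (top_le_iff.1 hle)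
    · intro h M hMtop hMcl hMfd hmax
      by_contra ha
      have h1 := h M hMtop hMcl hMfd
      set T := sInf {N : LieSubalgebra ℂ L | IsClosed (N : Set L) ∧ M ≤ N ∧ a ∈ N} with hT
      have hMT : M ≤ T := le_sInf fun N hN => hN.2.1
      have haT : a ∈ T := by
        have : (T : Set L) = ⋂ s ∈ {N : LieSubalgebra ℂ L |
            IsClosed (N : Set L) ∧ M ≤ N ∧ a ∈ N}, (s : Set L) := LieSubalgebra.coe_sInf _
        show a ∈ (T : Set L)
        rw [this]
        exact Set.mem_iInter₂.2 fun N hN => hN.2.2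
      have hlt : M < T := lt_of_le_of_ne hMT (fun e => ha (by rw [e]; exact haT))
      exact h1 (hmax T hlt)
  · -- Lie ideal case
    constructor
    · intro h M hMtop hMcl hMfd
      obtain ⟨N, hMN, hNtop, hmax⟩ := aux_max_ideal hMtop hMfd
      have hMN' : (M : Submodule ℂ L) ≤ (N : Submodule ℂ L) :=
        (LieSubmodule.toSubmodule_le_toSubmodule _ _).2 hMN
      have hNcl : IsClosed (N : Set L) := aux_closed hMcl hMfd hMN'
      haveI hNfd : FiniteDimensional ℂ (L ⧸ (N : Submodule ℂ L)) := aux_fd hMfd hMN'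
      have haN : a ∈ N := h N hNtop hNcl hNfd hmax
      intro htop
      have hle : sInf {N' : LieIdeal ℂ L | IsClosed (N' : Set L) ∧ M ≤ N' ∧ a ∈ N'} ≤ N :=
        sInf_le ⟨hNcl, hMN, haN⟩
      rw [htop] at hle
      exact hNtop (top_le_iff.1 hle)
    · intro h M hMtop hMcl hMfd hmax
      by_contra ha
      have h1 := h M hMtop hMcl hMfd
      set T := sInf {N : LieIdeal ℂ L | IsClosed (N : Set L) ∧ M ≤ N ∧ a ∈ N} with hT
      have hMT : M ≤ T := le_sInf fun N hN => hN.2.1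
      have haT : a ∈ T := by
        have : (T : Set L) = ⋂ s ∈ {N : LieIdeal ℂ L |
            IsClosed (N : Set L) ∧ M ≤ N ∧ a ∈ N}, (s : Set L) := LieSubmodule.coe_sInf _
        show a ∈ (T : Set L)
        rw [this]
        exact Set.mem_iInter₂.2 fun N hN => hN.2.2
      have hlt : M < T := lt_of_le_of_ne hMT (fun e => ha (by rw [e]; exact haT))
      exact h1 (hmax T hlt)
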